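/- Let f : ℕ → ℕ. Suppose that for every domain X' and every binary concept class H ⊆ {0,1}^{X'} with finite VC dimension d, there exists a stable exact realizable sample compression scheme for H of size at most f(d). Then for every class C ⊆ [0,1]^X with finite pseudo-dimension d_P, every ε ∈ (0,1), and every p ∈ [1,∞], there exists an ε-approximate realizable compression scheme for C with respect to the ℓ_p loss of size at most f(d_P). -/

import Mathlib

universe u

/-- A finite sample `S` is realizable by the concept class `C`. -/
def Realizable {X Y : Type*} (C : Set (X → Y)) (S : List (X × Y)) : Prop :=
  ∃ c ∈ C, ∀ p ∈ S, c p.1 = p.2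

/-- `(κ, ρ)` is an exact realizable sample compression scheme for `C` of size at most `k`. -/
def IsExactRealizableScheme {X Y : Type*} (C : Set (X → Y)) (k : ℕ)
    (κ : List (X × Y) → List (X × Y) × List Bool)
    (ρ : List (X × Y) × List Bool → X → Y) : Prop :=
  (∀ S : List (X × Y), (κ S).1 ⊆ S) ∧
  (∀ S : List (X × Y), Realizable C S → (κ S).1.length + (κ S).2.length ≤ k) ∧
  (∀ S : List (X × Y), Realizable C S → ∀ p ∈ S, ρ (κ S) p.1 = p.2)

/-- A compression function is stable: for every realizable `S` and every `T` with
`κ S ⊆ T ⊆ S`, `κ T = κ S`. -/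
def IsStable {X Y : Type*} (C : Set (X → Y))
    (κ : List (X × Y) → List (X × Y) × List Bool) : Prop :=
  ∀ S T : List (X × Y), Realizable C S → (κ S).1 ⊆ T → T ⊆ S → κ T = κ S

/-- `n` points of `X` are shattered by the binary concept class `H ⊆ {0,1}^X`. -/
def ShattersN {X : Type*} (H : Set (X → Bool)) (n : ℕ) : Prop :=
  ∃ x : Fin n → X, ∀ b : Fin n → Bool, ∃ h ∈ H, ∀ i, h (x i) = b i

/-- `H` has (finite) VC dimension exactly `d`. -/
def IsVCDim {X : Type*} (H : Set (X → Bool)) (d : ℕ) : Prop :=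
  ShattersN H d ∧ ¬ ShattersN H (d + 1)

/-- `n` points of `X` are P-shattered by the real-valued class `C ⊆ [0,1]^X`. -/
def PShattersN {X : Type*} (C : Set (X → ℝ)) (n : ℕ) : Prop :=
  ∃ (x : Fin n → X) (y : Fin n → ℝ), (∀ i, y i ∈ Set.Icc (0:ℝ) 1) ∧
    ∀ b : Fin n → Bool, ∃ c ∈ C, ∀ i, (c (x i) ≤ y i ↔ b i = true)

/-- `C` has (finite) pseudo-dimension exactly `d`. -/
def IsPseudoDim {X : Type*} (C : Set (X → ℝ)) (d : ℕ) : Prop :=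
  PShattersN C d ∧ ¬ PShattersN C (d + 1)

/-- An `ε`-approximate realizable `ℓ_∞` compression scheme for `C ⊆ [0,1]^X`
of size at most `k`. -/
def IsApproxLinfScheme {X : Type*} (C : Set (X → ℝ)) (k : ℕ) (ε : ℝ)
    (κ : List (X × ℝ) → List (X × ℝ) × List Bool)
    (ρ : List (X × ℝ) × List Bool → X → ℝ) : Prop :=
  (∀ S : List (X × ℝ), (κ S).1 ⊆ S) ∧
  (∀ T x, ρ T x ∈ Set.Icc (0:ℝ) 1) ∧
  (∀ S : List (X × ℝ), Realizable C S → (κ S).1.length + (κ S).2.length ≤ k) ∧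
  (∀ S : List (X × ℝ), Realizable C S → ∀ p ∈ S, |ρ (κ S) p.1 - p.2| ≤ ε)

/-- An `ε`-approximate realizable `ℓ_p` compression scheme for `C ⊆ [0,1]^X`
of size at most `k`. -/
def IsApproxLpScheme {X : Type*} (C : Set (X → ℝ)) (k : ℕ) (p ε : ℝ)
    (κ : List (X × ℝ) → List (X × ℝ) × List Bool)
    (ρ : List (X × ℝ) × List Bool → X → ℝ) : Prop :=
  (∀ S : List (X × ℝ), (κ S).1 ⊆ S) ∧
  (∀ T x, ρ T x ∈ Set.Icc (0:ℝ) 1) ∧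
  (∀ S : List (X × ℝ), Realizable C S → (κ S).1.length + (κ S).2.length ≤ k) ∧
  (∀ S : List (X × ℝ), Realizable C S →
    (S.map (fun q => |ρ (κ S) q.1 - q.2| ^ p)).sum ≤ ε * S.length)

section Aux
variable {X : Type u}

noncomputable def expandPt (ε : ℝ) (N : ℕ) (q : X × ℝ) : List ((X × ℝ) × Bool) :=
  (List.range (N + 1)).map (fun j : ℕ => ((q.1, ε * (j:ℝ)), decide (q.2 ≤ ε * (j:ℝ))))

noncomputable def expandS (ε : ℝ) (N : ℕ) (S : List (X × ℝ)) : List ((X × ℝ) × Bool) :=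
  S.flatMap (expandPt ε N)

open Classical in
noncomputable def pickOrig (ε : ℝ) (N : ℕ) (S : List (X × ℝ)) (e : (X × ℝ) × Bool) : X × ℝ :=
  if h : ∃ q, q ∈ S ∧ e ∈ expandPt ε N q then h.choose else e.1

noncomputable def κC (ε : ℝ) (N : ℕ)
    (κ₀ : List ((X × ℝ) × Bool) → List ((X × ℝ) × Bool) × List Bool)
    (S : List (X × ℝ)) : List (X × ℝ) × List Bool :=
  ((κ₀ (expandS ε N S)).1.map (pickOrig ε N S), (κ₀ (expandS ε N S)).2)

noncomputable def ρC (ε : ℝ) (N : ℕ)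
    (κ₀ : List ((X × ℝ) × Bool) → List ((X × ℝ) × Bool) × List Bool)
    (ρ₀ : List ((X × ℝ) × Bool) × List Bool → (X × ℝ) → Bool)
    (T : List (X × ℝ) × List Bool) (x : X) : ℝ :=
  min 1 (ε * ((if hex : ∃ j, j ≤ N ∧ ρ₀ (κ₀ (expandS ε N T.1)) (x, ε * j) = true
      then Nat.find hex else 0 : ℕ) : ℝ))

end Aux

/-- Regression reduction with stable binary compression: if every binary class of
finite VC dimension `d` has a stable exact realizable compression scheme of size at
most `f d`, then every class `C ⊆ [0,1]^X` of finite pseudo-dimension `d_P` admits,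
for every `ε ∈ (0,1)` and every `p ∈ [1,∞]` (the `ℓ_∞` case stated separately), an
`ε`-approximate realizable `ℓ_p` compression scheme of size at most `f d_P`. -/
theorem regression_approx_compression_of_stable (f : ℕ → ℕ)
    (hbin : ∀ (X' : Type u) (H : Set (X' → Bool)) (d : ℕ), IsVCDim H d →
      ∃ κ ρ, IsExactRealizableScheme H (f d) κ ρ ∧ IsStable H κ) :
    ∀ (X : Type u) (C : Set (X → ℝ)),
      (∀ g ∈ C, ∀ x, g x ∈ Set.Icc (0:ℝ) 1) →
      ∀ dP : ℕ, IsPseudoDim C dP →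
      ∀ ε : ℝ, 0 < ε → ε < 1 →
        (∃ κ ρ, IsApproxLinfScheme C (f dP) ε κ ρ) ∧
        (∀ p : ℝ, 1 ≤ p → ∃ κ ρ, IsApproxLpScheme C (f dP) p ε κ ρ) := by
  intro X C hC dP hPD ε hε0 hε1
  set H : Set ((X × ℝ) → Bool) :=
    {h | ∃ c ∈ C, h = fun q => decide (c q.1 ≤ q.2)} with hHdef
  obtain ⟨hsh, hnsh⟩ := hPD
  have hVC : IsVCDim H dP := by
    constructor
    · obtain ⟨x, y, hy, hb⟩ := hsh
      refine ⟨fun i => (x i, y i), fun b => ?_⟩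
      obtain ⟨c, hcC, hcb⟩ := hb b
      refine ⟨fun q => decide (c q.1 ≤ q.2), ⟨c, hcC, rfl⟩, fun i => ?_⟩
      have h := hcb i
      cases hbi : b i
      · rw [hbi] at h
        simp only [Bool.false_eq_true, iff_false] at h
        exact decide_eq_false h
      · exact decide_eq_true (h.mpr hbi)
    · rintro ⟨q, hq⟩
      apply hnsh
      refine ⟨fun i => (q i).1, fun i => (q i).2, fun i => ?_, fun b => ?_⟩
      · constructor
        · obtain ⟨h, ⟨c, hcC, rfl⟩, hh⟩ := hq (fun _ => true)
          have hle : c (q i).1 ≤ (q i).2 := of_decide_eq_true (hh i)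
          have := (hC c hcC (q i).1).1
          linarith
        · obtain ⟨h, ⟨c, hcC, rfl⟩, hh⟩ := hq (fun _ => false)
          have hlt : ¬ (c (q i).1 ≤ (q i).2) := of_decide_eq_false (hh i)
          push_neg at hlt
          have := (hC c hcC (q i).1).2
          linarith
      · obtain ⟨h, ⟨c, hcC, rfl⟩, hh⟩ := hq b
        refine ⟨c, hcC, fun i => ?_⟩
        have hhi := hh i
        constructor
        · intro hle; rw [← hhi]; exact decide_eq_true hle
        · intro hbi; rw [hbi] at hhi; exact of_decide_eq_true hhi
  obtain ⟨κ₀, ρ₀, ⟨hκsub, hκsize, hρcorr⟩, hstab⟩ := hbin (X × ℝ) H dP hVC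
  set N : ℕ := ⌈ε⁻¹⌉₊ with hN
  have hεN : (1:ℝ) ≤ ε * N := by
    have h1 : ε⁻¹ ≤ (N : ℝ) := Nat.le_ceil _
    calc (1:ℝ) = ε * ε⁻¹ := (mul_inv_cancel₀ hε0.ne').symm
      _ ≤ ε * N := by exact mul_le_mul_of_nonneg_left h1 hε0.le
  -- realizability transfers to the expanded binary sample
  have hrealB : ∀ S : List (X × ℝ), Realizable C S → Realizable H (expandS ε N S) := by
    rintro S ⟨c, hcC, hc⟩
    refine ⟨fun q => decide (c q.1 ≤ q.2), ⟨c, hcC, rfl⟩, ?_⟩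
    intro e he
    rw [expandS, List.mem_flatMap] at he
    obtain ⟨q, hqS, he⟩ := he
    rw [expandPt, List.mem_map] at he
    obtain ⟨j, _, rfl⟩ := he
    simp only
    rw [hc q hqS]
  -- the compressed real sample is a subsample
  have hsubS : ∀ S : List (X × ℝ), (κC ε N κ₀ S).1 ⊆ S := by
    intro S t ht
    simp only [κC] at ht
    obtain ⟨e, he, rfl⟩ := List.mem_map.mp ht
    have heB := hκsub (expandS ε N S) he
    rw [expandS, List.mem_flatMap] at heB
    have hd : ∃ q, q ∈ S ∧ e ∈ expandPt ε N q := by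
      obtain ⟨q, h1, h2⟩ := heB; exact ⟨q, h1, h2⟩
    rw [pickOrig, dif_pos hd]
    exact hd.choose_spec.1
  -- size bound
  have hsize : ∀ S : List (X × ℝ), Realizable C S →
      (κC ε N κ₀ S).1.length + (κC ε N κ₀ S).2.length ≤ f dP := by
    intro S hS
    simp only [κC, List.length_map]
    exact hκsize _ (hrealB S hS)
  -- range of the reconstruction
  have hmem01 : ∀ T x, ρC ε N κ₀ ρ₀ T x ∈ Set.Icc (0:ℝ) 1 := by
    intro T x
    refine ⟨le_min zero_le_one (mul_nonneg hε0.le (Nat.cast_nonneg _)), min_le_left _ _⟩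
  -- stability: the decompressor can recompute the binary compression
  have hstabeq : ∀ S : List (X × ℝ), Realizable C S →
      κ₀ (expandS ε N (κC ε N κ₀ S).1) = κ₀ (expandS ε N S) := by
    intro S hS
    apply hstab
    · exact hrealB S hS
    · intro e he
      have hd : ∃ q, q ∈ S ∧ e ∈ expandPt ε N q := by
        have h := hκsub (expandS ε N S) he
        rw [expandS, List.mem_flatMap] at h
        obtain ⟨q, h1, h2⟩ := h; exact ⟨q, h1, h2⟩
      refine List.mem_flatMap.mpr ⟨pickOrig ε N S e, ?_, ?_⟩
      · simp only [κC]
        exact List.mem_map_of_mem he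
      · rw [pickOrig, dif_pos hd]
        exact hd.choose_spec.2
    · intro e he
      rw [expandS, List.mem_flatMap] at he ⊢
      obtain ⟨q, hq, h2⟩ := he
      exact ⟨q, hsubS S hq, h2⟩
  -- ℓ∞ accuracy
  have hacc : ∀ S : List (X × ℝ), Realizable C S →
      ∀ q ∈ S, |ρC ε N κ₀ ρ₀ (κC ε N κ₀ S) q.1 - q.2| ≤ ε := by
    intro S hS q hq
    obtain ⟨c, hcC, hc⟩ := hS
    have hy0 : 0 ≤ q.2 := by rw [← hc q hq]; exact (hC c hcC q.1).1
    have hy1 : q.2 ≤ 1 := by rw [← hc q hq]; exact (hC c hcC q.1).2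
    have key : ∀ j, j ≤ N →
        ρ₀ (κ₀ (expandS ε N (κC ε N κ₀ S).1)) (q.1, ε * j) = decide (q.2 ≤ ε * j) := by
      intro j hj
      rw [hstabeq S ⟨c, hcC, hc⟩]
      have hmem : ((q.1, ε * (j:ℕ)), decide (q.2 ≤ ε * (j:ℕ))) ∈ expandS ε N S := by
        rw [expandS, List.mem_flatMap]
        have hjr : j ∈ List.range (N + 1) := List.mem_range.mpr (by omega)
        refine ⟨q, hq, ?_⟩
        rw [expandPt]
        exact List.mem_map_of_mem (f := fun j : ℕ => ((q.1, ε * (j:ℝ)), decide (q.2 ≤ ε * (j:ℝ)))) hjr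
      exact hρcorr (expandS ε N S) (hrealB S ⟨c, hcC, hc⟩) _ hmem
    have hex : ∃ j, j ≤ N ∧
        ρ₀ (κ₀ (expandS ε N (κC ε N κ₀ S).1)) (q.1, ε * j) = true := by
      refine ⟨N, le_rfl, ?_⟩
      rw [key N le_rfl]
      exact decide_eq_true (le_trans hy1 hεN)
    simp only [ρC]
    rw [dif_pos hex]
    set j₀ := Nat.find hex with hj₀def
    have hspec := Nat.find_spec hex
    have h1 : q.2 ≤ ε * j₀ := by
      have := hspec.2
      rw [key j₀ hspec.1] at this
      exact of_decide_eq_true this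
    have h2 : ε * j₀ ≤ q.2 + ε := by
      rcases Nat.eq_zero_or_pos j₀ with h0 | hpos
      · rw [h0]
        simp only [Nat.cast_zero, mul_zero]
        linarith
      · have hm := Nat.find_min hex (show j₀ - 1 < j₀ by omega)
        rw [key (j₀ - 1) (by omega)] at hm
        have hnot : ¬ (q.2 ≤ ε * ((j₀ - 1 : ℕ) : ℝ)) := by
          intro hle
          exact hm ⟨by omega, decide_eq_true hle⟩
        push_neg at hnot
        have hcast : ((j₀ - 1 : ℕ) : ℝ) = (j₀ : ℝ) - 1 := by
          have : (1:ℕ) ≤ j₀ := hpos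
          push_cast [this]
          ring
        rw [hcast] at hnot
        nlinarith
    have hmin_ge : q.2 ≤ min 1 (ε * j₀) := le_min hy1 h1
    rw [abs_of_nonneg (by linarith)]
    have hmle : min 1 (ε * (j₀:ℝ)) ≤ ε * j₀ := min_le_right _ _
    linarith
  refine ⟨⟨κC ε N κ₀, ρC ε N κ₀ ρ₀, hsubS, hmem01, hsize, hacc⟩, ?_⟩
  intro p hp
  refine ⟨κC ε N κ₀, ρC ε N κ₀ ρ₀, hsubS, hmem01, hsize, ?_⟩
  intro S hS
  have hbd : ∀ t ∈ S.map (fun q => |ρC ε N κ₀ ρ₀ (κC ε N κ₀ S) q.1 - q.2| ^ p), t ≤ ε := by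
    intro t ht
    obtain ⟨q, hq, rfl⟩ := List.mem_map.mp ht
    have h1 := hacc S hS q hq
    calc |ρC ε N κ₀ ρ₀ (κC ε N κ₀ S) q.1 - q.2| ^ p
        ≤ ε ^ p := Real.rpow_le_rpow (abs_nonneg _) h1 (le_trans zero_le_one hp)
      _ ≤ ε ^ (1:ℝ) := Real.rpow_le_rpow_of_exponent_ge hε0 hε1.le hp
      _ = ε := Real.rpow_one ε
  have hsum := List.sum_le_card_nsmul _ ε hbd
  rwa [List.length_map, nsmul_eq_mul, mul_comm] at hsum
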